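/- Fix p, q ∈ ℝ and set P = (p,q). Beloch's curve 𝓕 = {(x,y) ∈ ℝ² : F(x,y) = 0} is exactly the union of the orbit of P and the singleton {P}: 𝓕 = {P'(r) : r ∈ ℝ} ∪ {(p,q)}. In particular, every point (s,t) ≠ (p,q) with F(s,t) = 0 equals P'(r) for some r ∈ ℝ. -/

import Mathlib

/-- The reflection of a point `Q = (u,v)` across the line
`ℓ_r = {(x,y) : x + r*y - r^2 = 0}`. -/
noncomputable def reflLine (r : ℝ) (Q : ℝ × ℝ) : ℝ × ℝ :=
  (Q.1 - 2 * (Q.1 + r * Q.2 - r ^ 2) / (1 + r ^ 2) * 1,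
   Q.2 - 2 * (Q.1 + r * Q.2 - r ^ 2) / (1 + r ^ 2) * r)

/-- Beloch's polynomial `F(x,y)` associated with `P = (p,q)`. -/
def belochF (p q x y : ℝ) : ℝ :=
  2 * (q - y) ^ 2 - (q + y) * (q - y) * (p - x) - (p - x) ^ 2 * (p + x)

/-- Beloch's curve `𝓕 = {F = 0}` is exactly the union of the orbit
`{P'(r) : r ∈ ℝ}` of `P = (p,q)` and the singleton `{P}`. -/
theorem stmt_5 (p q : ℝ) :
    {X : ℝ × ℝ | belochF p q X.1 X.2 = 0} =
      (Set.range fun r : ℝ => reflLine r (p, q)) ∪ {(p, q)} := by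
  ext ⟨s, t⟩
  simp only [Set.mem_setOf_eq, Set.mem_union, Set.mem_range, Set.mem_singleton_iff,
    reflLine, belochF, Prod.mk.injEq]
  constructor
  · intro h
    by_cases hp : s = p ∧ t = q
    · right; exact ⟨hp.1, hp.2⟩
    · left
      have hu : p - s ≠ 0 := by
        intro h0
        apply hp
        have hs : s = p := by linarith
        subst hs
        refine ⟨rfl, ?_⟩
        have h2 : (q - t) ^ 2 = 0 := by nlinarith [h]
        have := pow_eq_zero_iff (n := 2) (by norm_num) |>.mp h2
        linarith
      refine ⟨(q - t) / (p - s), ?_, ?_⟩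
      · have hD : (1 : ℝ) + ((q - t) / (p - s)) ^ 2 ≠ 0 := by positivity
        field_simp
        linear_combination h
      · have hD : (1 : ℝ) + ((q - t) / (p - s)) ^ 2 ≠ 0 := by positivity
        field_simp
        linear_combination (q - t) * h
  · rintro (⟨r, hr1, hr2⟩ | ⟨h1, h2⟩)
    · have hD : (1 : ℝ) + r ^ 2 ≠ 0 := by positivity
      rw [← hr1, ← hr2]
      field_simp
      ring
    · subst h1; subst h2; ring
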